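/- Let χ = (P₁,P₂,P₃,P₄) be a polynomial vector field in ℝ⁴ whose components are all homogeneous polynomials of degree n (a Type-n vector field). Then χ is a vector field on S¹×S² if and only if there exist polynomials A, B ∈ ℝ[x₁,x₂,x₃,x₄] such that P₁ = A·x₂, P₂ = −A·x₁, P₃ = B·x₄ and P₄ = −B·x₃. -/

import Mathlib

open MvPolynomial

/-- The action of the polynomial vector field `χ = (P 0, P 1, P 2, P 3)` on a polynomial:
`χf = Σᵢ Pᵢ ∂f/∂xᵢ`. -/
noncomputable def chi (P : Fin 4 → MvPolynomial (Fin 4) ℝ)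
    (f : MvPolynomial (Fin 4) ℝ) : MvPolynomial (Fin 4) ℝ :=
  ∑ i, P i * pderiv i f

/-- `G_a = (x₁² + x₂² - a²)² + x₃² + x₄² - 1`, whose zero set is `S¹ × S²`. -/
noncomputable def Ga (a : ℝ) : MvPolynomial (Fin 4) ℝ :=
  (X 0 ^ 2 + X 1 ^ 2 - C (a ^ 2)) ^ 2 + X 2 ^ 2 + X 3 ^ 2 - 1

namespace Stmt8Aux

abbrev R4 := MvPolynomial (Fin 4) ℝ

/-- The "grading" map sending `X i ↦ C (X i) * t`. -/
noncomputable def phi : R4 →ₐ[ℝ] Polynomial R4 :=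
  aeval (fun i => Polynomial.C (X i) * Polynomial.X)

lemma phi_monomial (v : Fin 4 →₀ ℕ) (c : ℝ) :
    phi (monomial v c) = Polynomial.C (monomial v c) * Polynomial.X ^ v.degree := by
  rw [phi, aeval_monomial, monomial_eq]
  simp only [mul_pow, ← Polynomial.C_pow]
  rw [Finsupp.prod_mul, ← map_finsuppProd (Polynomial.C : R4 →+* Polynomial R4)]
  rw [show (v.prod fun _ e => Polynomial.X (R := R4) ^ e)
      = ∏ a ∈ v.support, Polynomial.X ^ v a from rfl]
  rw [Finset.prod_pow_eq_pow_sum, Finsupp.prod]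
  simp [Finsupp.degree, map_mul, mul_assoc]
  exact Or.inl rfl

lemma phi_homog {p : R4} {d : ℕ} (h : p.IsHomogeneous d) :
    phi p = Polynomial.C p * Polynomial.X ^ d := by
  conv_lhs => rw [p.as_sum]
  rw [map_sum]
  conv_rhs => rw [p.as_sum]
  rw [map_sum, Finset.sum_mul]
  apply Finset.sum_congr rfl
  intro v hv
  rw [phi_monomial]
  congr 1
  exact congrArg _ ((Finsupp.degree_eq_weight_one (R := ℕ) ▸ h (mem_support_iff.mp hv)) : v.degree = d)

lemma phi_C (c : ℝ) : phi (C c) = Polynomial.C (C c) := by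
  rw [phi_homog (isHomogeneous_C _ c), pow_zero, mul_one]

lemma primeX (i : Fin 4) : Prime (X i : R4) := by
  have h0 : Prime (X 0 : R4) := by
    rw [← MulEquiv.prime_iff (finSuccEquiv ℝ 3).toMulEquiv]
    simpa [finSuccEquiv_X_zero] using
      (Polynomial.prime_X : Prime (Polynomial.X : Polynomial (MvPolynomial (Fin 3) ℝ)))
  have := (MulEquiv.prime_iff (renameEquiv ℝ (Equiv.swap 0 i)).toMulEquiv).mpr h0
  simpa [renameEquiv_apply, rename_X, Equiv.swap_apply_left] using this

lemma pair_decomp {i j : Fin 4} (hij : i ≠ j) {p q : R4}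
    (h : X i * p + X j * q = 0) : ∃ A : R4, p = A * X j ∧ q = -A * X i := by
  have hdvd : (X j : R4) ∣ X i * p := ⟨-q, by linear_combination h⟩
  have hnd : ¬ (X j : R4) ∣ X i := by
    rintro ⟨t, ht⟩
    have := congrArg (eval (fun k => if k = i then (1:ℝ) else 0)) ht
    simp only [eval_X, eval_mul, if_pos rfl, if_neg (Ne.symm hij), zero_mul] at this
    exact one_ne_zero this
  obtain ⟨A, hA⟩ := ((primeX j).dvd_mul.mp hdvd).resolve_left hnd
  refine ⟨A, by rw [hA]; ring, ?_⟩
  have h2 : X j * (X i * A + q) = 0 := by rw [hA] at h; linear_combination h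
  have h3 : X i * A + q = 0 := by
    rcases mul_eq_zero.mp h2 with h' | h'
    · exact absurd h' (X_ne_zero j)
    · exact h'
  linear_combination h3

lemma key {a : ℝ} (ha : 1 < a) {n : ℕ} {Q1 Q2 K : R4}
    (hQ1 : Q1.IsHomogeneous (n + 1)) (hQ2 : Q2.IsHomogeneous (n + 1))
    (hE : 4 * (X 0 ^ 2 + X 1 ^ 2 - C (a ^ 2)) * Q1 + 2 * Q2 = K * Ga a) :
    Q1 = 0 ∧ Q2 = 0 := by
  set r2 : R4 := X 0 ^ 2 + X 1 ^ 2 with hr2def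
  have hr2 : r2.IsHomogeneous 2 :=
    (isHomogeneous_X_pow 0 2).add (isHomogeneous_X_pow 1 2)
  have hr4 : (r2 ^ 2).IsHomogeneous 4 := by simpa using hr2.pow 2
  set c2 : R4 := X 2 ^ 2 + X 3 ^ 2 - C (2 * a ^ 2) * r2 with hc2def
  have hc2 : c2.IsHomogeneous 2 :=
    ((isHomogeneous_X_pow 2 2).add (isHomogeneous_X_pow 3 2)).sub (hr2.C_mul _)
  set c0 : R4 := C (a ^ 2 * a ^ 2 - 1) with hc0def
  have hc0 : c0.IsHomogeneous 0 := isHomogeneous_C _ _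
  have hGa : Ga a = r2 ^ 2 + c2 + c0 := by
    rw [Ga, hc0def, hc2def, hr2def]
    simp only [map_sub, map_mul, map_one, map_ofNat]
    ring
  have hr2ne : r2 ≠ 0 := by
    intro h
    have := congrArg (eval (fun _ => (1:ℝ))) h
    simp [hr2def] at this
  have hc0ne : c0 ≠ 0 := by
    rw [hc0def, Ne, MvPolynomial.C_eq_zero]
    nlinarith [sq_nonneg (a ^ 2 - 1), sq_nonneg (a - 1)]
  -- the image of the main identity under `phi`
  have hphi := congrArg phi hE
  simp only [hGa, map_add, map_mul, map_sub, map_ofNat, phi_homog hr2, phi_homog hQ1,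
      phi_homog hQ2, phi_homog hr4, phi_homog hc2, phi_homog hc0, phi_C] at hphi
  set k : Polynomial R4 := phi K with hkdef
  have hL : Polynomial.C (4 * r2 * Q1) * Polynomial.X ^ (n + 3)
      + Polynomial.C (2 * Q2 - 4 * C (a ^ 2) * Q1) * Polynomial.X ^ (n + 1)
      = k * (Polynomial.C (r2 ^ 2) * Polynomial.X ^ 4
        + Polynomial.C c2 * Polynomial.X ^ 2 + Polynomial.C c0 * Polynomial.X ^ 0) := by
    rw [← hphi]
    simp only [map_mul, map_sub, map_ofNat]
    ring
  set g : Polynomial R4 := Polynomial.C (r2 ^ 2) * Polynomial.X ^ 4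
        + Polynomial.C c2 * Polynomial.X ^ 2 + Polynomial.C c0 * Polynomial.X ^ 0 with hgdef
  have hcoeffg0 : g.coeff 0 = c0 := by
    simp [hgdef, Polynomial.coeff_X_pow]
  have hgne : g ≠ 0 := fun h => hc0ne (by rw [← hcoeffg0, h, Polynomial.coeff_zero])
  by_cases hk : k = 0
  · rw [hk, zero_mul] at hL
    have h3 := congrArg (fun p => Polynomial.coeff p (n + 3)) hL
    have h1 := congrArg (fun p => Polynomial.coeff p (n + 1)) hL
    simp only [Polynomial.coeff_add, Polynomial.coeff_C_mul, Polynomial.coeff_X_pow,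
      mul_ite, mul_one, mul_zero, Polynomial.coeff_zero, if_true] at h3 h1
    rw [if_neg (show ¬ n + 3 = n + 1 by omega), add_zero] at h3
    rw [if_neg (show ¬ n + 1 = n + 3 by omega), zero_add] at h1
    have hQ1z : Q1 = 0 := by
      have h4 : (4 : R4) * r2 ≠ 0 := mul_ne_zero (by norm_num) hr2ne
      have h5 : 4 * r2 * Q1 = 0 := h3
      exact (mul_eq_zero.mp h5).resolve_left h4
    refine ⟨hQ1z, ?_⟩
    rw [hQ1z] at h1
    have : (2 : R4) * Q2 = 0 := by linear_combination h1
    exact (mul_eq_zero.mp this).resolve_left (by norm_num)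
  · exfalso
    have hLne : Polynomial.C (4 * r2 * Q1) * Polynomial.X ^ (n + 3)
        + Polynomial.C (2 * Q2 - 4 * C (a ^ 2) * Q1) * Polynomial.X ^ (n + 1) ≠ 0 := by
      rw [hL]; exact mul_ne_zero hk hgne
    have hgdeg : g.natDegree = 4 := by
      refine le_antisymm ?_ (Polynomial.le_natDegree_of_ne_zero ?_)
      · rw [hgdef]
        compute_degree
      · have hg4 : g.coeff 4 = r2 ^ 2 := by
          simp only [hgdef, Polynomial.coeff_add, Polynomial.coeff_C_mul,
            Polynomial.coeff_X_pow, mul_ite, mul_one, mul_zero]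
          norm_num
        rw [hg4]
        exact pow_ne_zero _ hr2ne
    have hgtd : g.natTrailingDegree = 0 :=
      Nat.le_zero.mp (Polynomial.natTrailingDegree_le_of_ne_zero (hcoeffg0 ▸ hc0ne))
    have hLdeg : (Polynomial.C (4 * r2 * Q1) * Polynomial.X ^ (n + 3)
        + Polynomial.C (2 * Q2 - 4 * C (a ^ 2) * Q1) * Polynomial.X ^ (n + 1)).natDegree
          ≤ n + 3 := by
      compute_degree
    have hLtd : n + 1 ≤ Polynomial.natTrailingDegree (Polynomial.C (4 * r2 * Q1)
        * Polynomial.X ^ (n + 3)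
        + Polynomial.C (2 * Q2 - 4 * C (a ^ 2) * Q1) * Polynomial.X ^ (n + 1)) := by
      apply Polynomial.le_natTrailingDegree hLne
      intro m hm
      simp only [Polynomial.coeff_add, Polynomial.coeff_C_mul, Polynomial.coeff_X_pow,
        mul_ite, mul_one, mul_zero]
      rw [if_neg (by omega), if_neg (by omega), add_zero]
    rw [hL, Polynomial.natDegree_mul hk hgne, hgdeg] at hLdeg
    rw [hL, Polynomial.natTrailingDegree_mul hk hgne, hgtd] at hLtd
    have := Polynomial.natTrailingDegree_le_natDegree k
    omega

lemma chi_Ga (a : ℝ) (P : Fin 4 → MvPolynomial (Fin 4) ℝ) :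
    chi P (Ga a) = 4 * (X 0 ^ 2 + X 1 ^ 2 - C (a ^ 2)) * (X 0 * P 0 + X 1 * P 1)
      + 2 * (X 2 * P 2 + X 3 * P 3) := by
  simp [chi, Ga, Fin.sum_univ_four, pderiv_X, Pi.single_apply, Derivation.leibniz,
    Derivation.leibniz_pow, map_sub, map_add]
  ring

end Stmt8Aux

open Stmt8Aux in
theorem stmt_8 (a : ℝ) (ha : 1 < a) (n : ℕ) (P : Fin 4 → MvPolynomial (Fin 4) ℝ)
    (hhom : ∀ i, (P i).IsHomogeneous n) :
    (∃ K : MvPolynomial (Fin 4) ℝ, chi P (Ga a) = K * Ga a) ↔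
      ∃ A B : MvPolynomial (Fin 4) ℝ,
        P 0 = A * X 1 ∧ P 1 = -A * X 0 ∧ P 2 = B * X 3 ∧ P 3 = -B * X 2 := by
  constructor
  · rintro ⟨K, hK⟩
    rw [chi_Ga] at hK
    have hQ1 : (X 0 * P 0 + X 1 * P 1).IsHomogeneous (n + 1) := by
      have h0 := (isHomogeneous_X ℝ 0).mul (hhom 0)
      have h1 := (isHomogeneous_X ℝ 1).mul (hhom 1)
      rw [add_comm 1 n] at h0 h1
      exact h0.add h1
    have hQ2 : (X 2 * P 2 + X 3 * P 3).IsHomogeneous (n + 1) := by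
      have h0 := (isHomogeneous_X ℝ 2).mul (hhom 2)
      have h1 := (isHomogeneous_X ℝ 3).mul (hhom 3)
      rw [add_comm 1 n] at h0 h1
      exact h0.add h1
    obtain ⟨hz1, hz2⟩ := key ha hQ1 hQ2 hK
    obtain ⟨A, hA1, hA2⟩ := pair_decomp (by decide : (0 : Fin 4) ≠ 1) hz1
    obtain ⟨B, hB1, hB2⟩ := pair_decomp (by decide : (2 : Fin 4) ≠ 3) hz2
    exact ⟨A, B, hA1, hA2, hB1, hB2⟩
  · rintro ⟨A, B, h0, h1, h2, h3⟩
    refine ⟨0, ?_⟩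
    rw [chi_Ga, h0, h1, h2, h3]
    ring
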